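/- Given staircase data, let {f₀,…,f_{r−1}} = A ⊔ B be a partition of the first r staircase generators with f_{r−1} ∈ A. Then adjoining the last generator f_r = H₁⋯H_{t_r} to B enlarges the intersection by exactly one principal ideal: Ideal.span A ⊓ Ideal.span (B ∪ {f_r}) = (Ideal.span A ⊓ Ideal.span B) + ⟨V₁⋯V_{s₁}·f_r⟩. -/

import Mathlib

/- Common setup: R = ℂ[x₀,x₁,y₀,y₁] as MvPolynomial (Fin 4) ℂ with
   x₀ = X 0, x₁ = X 1, y₀ = X 2, y₁ = X 3.
   `Hf a` is the horizontal form a₁x₀ - a₀x₁ of the point a = [a₀:a₁] ∈ ℙ¹;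
   `Vf b` is the vertical form b₁y₀ - b₀y₁;
   `cross a b ≠ 0` says the (nonzero) pairs a, b are non-proportional,
   i.e. define distinct points of ℙ¹. -/

open MvPolynomial

noncomputable section

abbrev R : Type := MvPolynomial (Fin 4) ℂ

def Hf (a : ℂ × ℂ) : R := C a.2 * X 0 - C a.1 * X 1

def Vf (b : ℂ × ℂ) : R := C b.2 * X 2 - C b.1 * X 3

def cross (a b : ℂ × ℂ) : ℂ := a.1 * b.2 - a.2 * b.1

/-- The defining ideal of the point P = A×B of ℙ¹×ℙ¹. -/
def Ipt (P : (ℂ × ℂ) × (ℂ × ℂ)) : Ideal R := Ideal.span {Hf P.1, Vf P.2}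

/-- The defining ideal of a finite set of points (I_∅ = R = ⊤). -/
def Ipts (X : Finset ((ℂ × ℂ) × (ℂ × ℂ))) : Ideal R := X.inf Ipt

/-- The defining ideal of a set of points (I_∅ = R = ⊤). -/
def IptsSet (W : Set ((ℂ × ℂ) × (ℂ × ℂ))) : Ideal R := ⨅ P ∈ W, Ipt P

/-- Bihomogeneous: homogeneous separately in x₀,x₁ and in y₀,y₁. -/
def Bihom (f : R) : Prop :=
  ∃ a b : ℕ, IsWeightedHomogeneous (![1,1,0,0] : Fin 4 → ℕ) f a ∧
    IsWeightedHomogeneous (![0,0,1,1] : Fin 4 → ℕ) f b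

/-- `G` minimally generates `I`. -/
def MinGen (G : Finset R) (I : Ideal R) : Prop :=
  Ideal.span (G : Set R) = I ∧ ∀ g ∈ G, Ideal.span ((G : Set R) \ {g}) ≠ I

/-- Staircase data: r ≥ 1, 0 = t₀ < t₁ < ⋯ < t_r, 0 = s₀ < s₁ < ⋯ < s_r,
    pairwise distinct points A₁,…,A_{t_r} of ℙ¹ and pairwise distinct points
    B₁,…,B_{s_r} of ℙ¹ (all indexed starting at 1). -/
structure Staircase where
  r : ℕ
  t : ℕ → ℕ
  s : ℕ → ℕ
  A : ℕ → ℂ × ℂ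
  B : ℕ → ℂ × ℂ
  hr : 1 ≤ r
  ht0 : t 0 = 0
  hs0 : s 0 = 0
  ht : ∀ k, k < r → t k < t (k + 1)
  hs : ∀ k, k < r → s k < s (k + 1)
  hA0 : ∀ i ∈ Finset.Icc 1 (t r), A i ≠ 0
  hB0 : ∀ j ∈ Finset.Icc 1 (s r), B j ≠ 0
  hAd : ∀ i ∈ Finset.Icc 1 (t r), ∀ i' ∈ Finset.Icc 1 (t r), i ≠ i' → cross (A i) (A i') ≠ 0
  hBd : ∀ j ∈ Finset.Icc 1 (s r), ∀ j' ∈ Finset.Icc 1 (s r), j ≠ j' → cross (B j) (B j') ≠ 0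

/-- The staircase generator f_k = H₁⋯H_{t_k} · V₁⋯V_{s_{r-k}}. -/
def stairGen (S : Staircase) (k : ℕ) : R :=
  (∏ i ∈ Finset.Icc 1 (S.t k), Hf (S.A i)) * ∏ j ∈ Finset.Icc 1 (S.s (S.r - k)), Vf (S.B j)

lemma primeX (n : Fin 4) : Prime (X n : R) := by
  have h0 : Prime (X 0 : R) := by
    have h := (MulEquiv.prime_iff (p := (X 0 : R))
      (MvPolynomial.finSuccEquiv ℂ 3).toRingEquiv.toMulEquiv).symm
    rw [h]
    have e : (MvPolynomial.finSuccEquiv ℂ 3).toRingEquiv.toMulEquiv (X 0 : R) = Polynomial.X := by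
      simp [MvPolynomial.finSuccEquiv_X_zero]
    rw [e]
    exact Polynomial.prime_X
  have h := (MulEquiv.prime_iff (p := (X 0 : R))
      (MvPolynomial.renameEquiv ℂ (Equiv.swap (0 : Fin 4) n)).toRingEquiv.toMulEquiv).symm
  rw [h] at h0
  have e : (MvPolynomial.renameEquiv ℂ (Equiv.swap (0 : Fin 4) n)).toRingEquiv.toMulEquiv (X 0 : R)
      = X n := by
    simp [MvPolynomial.renameEquiv]
  rwa [e] at h0

lemma primeVf {b : ℂ × ℂ} (hb : b ≠ 0) : Prime (Vf b) := by
  by_cases h2 : b.2 = 0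
  · have h1 : b.1 ≠ 0 := fun h1 => hb (Prod.ext h1 h2)
    have hv : Vf b = C (-b.1) * X 3 := by simp [Vf, h2]
    rw [hv]
    exact (associated_unit_mul_left (X 3 : R) _
      ((neg_ne_zero.mpr h1).isUnit.map (C : ℂ →+* R))).symm.prime (primeX 3)
  · let σ : R →ₐ[ℂ] R := aeval ![X 0, X 1, Vf b, X 3]
    let τ : R →ₐ[ℂ] R := aeval ![X 0, X 1, C b.2⁻¹ * (X 2 + C b.1 * X 3), X 3]
    have hcc : (C b.2 : R) * C b.2⁻¹ = 1 := by
      rw [← C_mul, mul_inv_cancel₀ h2, C_1]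
    have hστ : σ.comp τ = AlgHom.id ℂ R := by
      apply MvPolynomial.algHom_ext
      intro i
      fin_cases i <;> simp [σ, τ, Vf] <;>
        first
          | linear_combination (X 2 : R) * hcc
          | linear_combination (X 2 + C b.1 * X 3 : R) * hcc
    have hτσ : τ.comp σ = AlgHom.id ℂ R := by
      apply MvPolynomial.algHom_ext
      intro i
      fin_cases i <;> simp [σ, τ, Vf] <;>
        first
          | linear_combination (X 2 : R) * hcc
          | linear_combination (X 2 + C b.1 * X 3 : R) * hcc
    let e : R ≃ₐ[ℂ] R := AlgEquiv.ofAlgHom σ τ hστ hτσ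
    have hp := (MulEquiv.prime_iff (p := (X 2 : R)) e.toRingEquiv.toMulEquiv).symm
    have e2 : e.toRingEquiv.toMulEquiv (X 2 : R) = Vf b := by
      show σ (X 2) = Vf b
      simp [σ]
    have h := hp.mp (primeX 2)
    rwa [e2] at h

lemma Hf_ne_zero {a : ℂ × ℂ} (ha : a ≠ 0) : Hf a ≠ 0 := by
  intro h
  apply ha
  have h2 := congrArg (eval (fun i : Fin 4 => if i = 0 then (1:ℂ) else 0)) h
  have h1 := congrArg (eval (fun i : Fin 4 => if i = 1 then (1:ℂ) else 0)) h
  simp [Hf] at h1 h2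
  exact Prod.ext h1 h2

lemma Vf_not_dvd_prodH {b : ℂ × ℂ} (T : Finset ℕ) (A : ℕ → ℂ × ℂ)
    (hA : ∀ i ∈ T, A i ≠ 0) : ¬ Vf b ∣ ∏ i ∈ T, Hf (A i) := by
  rintro ⟨q, hq⟩
  let φ : R →ₐ[ℂ] R := aeval ![X 0, X 1, 0, 0]
  have h1 : φ (∏ i ∈ T, Hf (A i)) = ∏ i ∈ T, Hf (A i) := by
    rw [map_prod]
    exact Finset.prod_congr rfl fun i _ => by simp [φ, Hf]
  have h2 : φ (Vf b) = 0 := by simp [φ, Vf]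
  have h0 : (∏ i ∈ T, Hf (A i)) = 0 := by
    rw [← h1, hq, map_mul, h2, zero_mul]
  rcases Finset.prod_eq_zero_iff.mp h0 with ⟨i, hi, hzero⟩
  exact Hf_ne_zero (hA i hi) hzero

lemma prod_primes_dvd_aux (s : Finset ℕ) (p : ℕ → R) (f : R) :
    (∀ j ∈ s, Prime (p j)) → (∀ j ∈ s, ¬ p j ∣ f) →
    ∀ c : R, (∏ j ∈ s, p j) ∣ c * f → (∏ j ∈ s, p j) ∣ c := by
  classical
  induction s using Finset.induction_on with
  | empty => intro _ _ c _; simp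
  | @insert a s ha ih =>
    intro hp hnd c h
    rw [Finset.prod_insert ha] at h ⊢
    have hpa : Prime (p a) := hp a (Finset.mem_insert_self _ _)
    have hda : p a ∣ c * f := dvd_trans (Dvd.intro _ rfl) h
    have hc : p a ∣ c := by
      rcases hpa.dvd_or_dvd hda with h1 | h1
      · exact h1
      · exact absurd h1 (hnd a (Finset.mem_insert_self _ _))
    obtain ⟨c1, rfl⟩ := hc
    have h2 : (∏ j ∈ s, p j) ∣ c1 * f := by
      have h3 : p a * ∏ j ∈ s, p j ∣ p a * (c1 * f) := by
        rwa [mul_assoc] at h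
      exact (mul_dvd_mul_iff_left hpa.ne_zero).mp h3
    exact mul_dvd_mul_left (p a)
      (ih (fun j hj => hp j (Finset.mem_insert_of_mem hj))
        (fun j hj => hnd j (Finset.mem_insert_of_mem hj)) c1 h2)

lemma Staircase.s_mono (S : Staircase) {k l : ℕ} (hkl : k ≤ l) (hl : l ≤ S.r) :
    S.s k ≤ S.s l := by
  induction l, hkl using Nat.le_induction with
  | base => exact le_rfl
  | succ l hkl ih =>
    exact le_trans (ih (by omega)) (le_of_lt (S.hs l (by omega)))

/-- (From the proof of Theorem 5.4.) If {f₀,…,f_{r-1}} = A ⊔ B is a partition of the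
first r staircase generators (encoded by index sets KA ⊔ KB = {0,…,r-1}) with
f_{r-1} ∈ A, then adjoining f_r = H₁⋯H_{t_r} to B enlarges the intersection by exactly
the principal ideal ⟨V₁⋯V_{s₁} · f_r⟩. -/
theorem statement15 (S : Staircase) (KA KB : Finset ℕ)
    (hUnion : KA ∪ KB = Finset.range S.r) (hDisj : Disjoint KA KB)
    (hlast : S.r - 1 ∈ KA) :
    Ideal.span (stairGen S '' ↑KA) ⊓
        Ideal.span (insert (stairGen S S.r) (stairGen S '' ↑KB)) =
      (Ideal.span (stairGen S '' ↑KA) ⊓ Ideal.span (stairGen S '' ↑KB)) +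
        Ideal.span {(∏ j ∈ Finset.Icc 1 (S.s 1), Vf (S.B j)) * stairGen S S.r} := by
  classical
  set V : R := ∏ j ∈ Finset.Icc 1 (S.s 1), Vf (S.B j) with hV
  set F : R := stairGen S S.r with hF
  have hr1 : S.r - 1 + 1 = S.r := Nat.succ_pred_eq_of_pos S.hr
  have hFr : F = ∏ i ∈ Finset.Icc 1 (S.t S.r), Hf (S.A i) := by
    rw [hF, stairGen, Nat.sub_self, S.hs0]
    simp
  -- splitting F through stairGen (r-1)
  have hsplit : stairGen S (S.r - 1) * (∏ i ∈ Finset.Ioc (S.t (S.r - 1)) (S.t S.r), Hf (S.A i))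
      = V * F := by
    rw [stairGen, hFr]
    have h1 : S.r - (S.r - 1) = 1 := by omega
    rw [h1]
    have htle : S.t (S.r - 1) ≤ S.t S.r := by
      have := S.ht (S.r - 1) (by omega)
      rw [hr1] at this
      omega
    have hicc : ∀ m : ℕ, Finset.Icc 1 m = Finset.Ioc 0 m := by
      intro m
      ext x
      simp [Nat.lt_iff_add_one_le]
    rw [hicc (S.t (S.r - 1)), hicc (S.t S.r)]
    rw [mul_right_comm, Finset.prod_Ioc_consecutive _ (Nat.zero_le _) htle]
    ring
  -- V * F lies in the span of the KA generators
  have hVFA : V * F ∈ Ideal.span (stairGen S '' ↑KA) := by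
    rw [← hsplit]
    exact Ideal.mul_mem_right _ _
      (Ideal.subset_span ⟨S.r - 1, Finset.mem_coe.mpr hlast, rfl⟩)
  -- V divides every stairGen k for k < r
  have hVdvd : ∀ k < S.r, V ∣ stairGen S k := by
    intro k hk
    rw [stairGen]
    have hsub : Finset.Icc 1 (S.s 1) ⊆ Finset.Icc 1 (S.s (S.r - k)) := by
      apply Finset.Icc_subset_Icc le_rfl
      exact S.s_mono (by omega) (by omega)
    exact (Finset.prod_dvd_prod_of_subset _ _ _ hsub).mul_left _
  have hKAsub : (↑KA : Set ℕ) ⊆ ↑(Finset.range S.r) :=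
    Finset.coe_subset.mpr (hUnion ▸ Finset.subset_union_left)
  have hKBsub : (↑KB : Set ℕ) ⊆ ↑(Finset.range S.r) :=
    Finset.coe_subset.mpr (hUnion ▸ Finset.subset_union_right)
  apply le_antisymm
  · -- hard direction
    intro g hg
    obtain ⟨hgA, hgB'⟩ := hg
    rw [Ideal.span_insert] at hgB'
    obtain ⟨y, hy, z, hz, hyz⟩ := Submodule.mem_sup.mp hgB'
    obtain ⟨c, rfl⟩ := Ideal.mem_span_singleton'.mp hy
    have hcf : c * F ∈ Ideal.span (stairGen S '' ↑(Finset.range S.r)) := by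
      have he : c * F = g - z := by rw [← hyz]; ring
      rw [he]
      exact Ideal.sub_mem _
        (Ideal.span_mono (Set.image_mono hKAsub) hgA)
        (Ideal.span_mono (Set.image_mono hKBsub) hz)
    have hdvd : V ∣ c * F := by
      rw [← Ideal.mem_span_singleton]
      refine Ideal.span_le.mpr ?_ hcf
      rintro _ ⟨k, hk, rfl⟩
      rw [SetLike.mem_coe, Ideal.mem_span_singleton]
      exact hVdvd k (Finset.mem_range.mp (Finset.mem_coe.mp hk))
    have hVc : V ∣ c := by
      refine prod_primes_dvd_aux (Finset.Icc 1 (S.s 1)) (fun j => Vf (S.B j)) F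
        (fun j hj => ?_) (fun j hj => ?_) c hdvd
      · refine primeVf (S.hB0 j ?_)
        exact Finset.Icc_subset_Icc le_rfl (S.s_mono S.hr le_rfl) hj
      · rw [hFr]
        exact Vf_not_dvd_prodH _ _ S.hA0
    obtain ⟨c1, rfl⟩ := hVc
    have hg' : g = z + c1 * (V * F) := by rw [← hyz]; ring
    have hzA : z ∈ Ideal.span (stairGen S '' ↑KA) := by
      have hze : z = g - c1 * (V * F) := by rw [hg']; ring
      rw [hze]
      exact Ideal.sub_mem _ hgA (Ideal.mul_mem_left _ _ hVFA)
    rw [hg', Submodule.add_eq_sup]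
    exact Submodule.add_mem_sup ⟨hzA, hz⟩
      (Ideal.mul_mem_left _ _ (Ideal.subset_span rfl))
  · -- easy direction
    rw [Submodule.add_eq_sup]
    apply sup_le
    · exact le_inf inf_le_left
        (le_trans inf_le_right (Ideal.span_mono (Set.subset_insert _ _)))
    · apply le_inf
      · rw [Ideal.span_le, Set.singleton_subset_iff]
        exact hVFA
      · rw [Ideal.span_le, Set.singleton_subset_iff]
        exact Ideal.mul_mem_left _ _
          (Ideal.subset_span (Set.mem_insert _ _))
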